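/- Let X ⊆ L₀(T) be an F-admissible F-space with 0 < μ(T) < ∞, and let Z ⊆ X be a compact set (for the metric induced by the F-norm) with sup{‖f(t)‖ : f ∈ Z, t ∈ T} ≤ M for some M > 0. Then for every ε > 0 there exists a finite measurable partition K of T such that sup{|P_K(f) − f|_F : f ∈ Z} < ε, where P_K is the averaging projection onto K-measurable simple functions. -/

import Mathlib

open MeasureTheory Filter Topology

/-- An *F-admissible F-space* `X ⊆ L₀(T)` of `W`-valued measurable functions on a
σ-finite measure space `(T, Σ, μ)` (Definition 3.2 of the paper):
a complete F-space containing all simple functions with support of finite measure,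
whose F-norm is monotone under pointwise norm domination, and satisfying
conditions (d), (e), (f) of the definition. -/
structure FAdmissibleSpace {T : Type*} [MeasurableSpace T] (μ : Measure T)
    (W : Type*) [NormedAddCommGroup W] [NormedSpace ℝ W] where
  /-- The carrier `X ⊆ L₀(T)`. -/
  carrier : Set (T → W)
  /-- The F-norm `|·|_F`. -/
  Fn : (T → W) → ℝ
  zero_mem : 0 ∈ carrier
  add_mem : ∀ f g, f ∈ carrier → g ∈ carrier → f + g ∈ carrier
  smul_mem : ∀ (c : ℝ) f, f ∈ carrier → c • f ∈ carrier
  /-- Members of `X` are (a.e. strongly) measurable, i.e. `X ⊆ L₀(T)`. -/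
  measurable_mem : ∀ f ∈ carrier, AEStronglyMeasurable f μ
  Fn_nonneg : ∀ f, 0 ≤ Fn f
  /-- F-norm axiom (i) (on `L₀`, i.e. up to a.e. equality). -/
  Fn_eq_zero : ∀ f ∈ carrier, (Fn f = 0 ↔ f =ᵐ[μ] 0)
  /-- F-norm axiom (ii). -/
  Fn_neg : ∀ f, Fn (-f) = Fn f
  /-- F-norm axiom (iii): triangle inequality. -/
  Fn_add : ∀ f g, Fn (f + g) ≤ Fn f + Fn g
  /-- F-norm axiom (iv): joint continuity of scalar multiplication. -/
  Fn_smul : ∀ (f : T → W) (fs : ℕ → T → W) (c : ℝ) (cs : ℕ → ℝ),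
      Tendsto (fun n => Fn (fs n - f)) atTop (𝓝 0) → Tendsto cs atTop (𝓝 c) →
      Tendsto (fun n => Fn (cs n • fs n - c • f)) atTop (𝓝 0)
  /-- (b): simple functions with support of finite measure belong to `X`. -/
  simple_mem : ∀ s : SimpleFunc T W, μ (Function.support s) < ⊤ → ⇑s ∈ carrier
  /-- (c): monotonicity of the F-norm under pointwise norm domination. -/
  mono : ∀ (f g : T → W), AEStronglyMeasurable f μ → g ∈ carrier →
      (∀ᵐ t ∂μ, ‖f t‖ ≤ ‖g t‖) → f ∈ carrier ∧ Fn f ≤ Fn g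
  /-- (d): `‖wₙ‖ → 0` implies `|wₙ χ_A|_F → 0` for `μ A < ∞`. -/
  tendsto_const_indicator : ∀ (w : ℕ → W) (A : Set T), MeasurableSet A → μ A < ⊤ →
      Tendsto (fun n => ‖w n‖) atTop (𝓝 0) →
      Tendsto (fun n => Fn (A.indicator fun _ => w n)) atTop (𝓝 0)
  /-- (e): `|w χ_{Aₙ}|_F → 0` iff `μ Aₙ → 0`, for `w ≠ 0`. -/
  indicator_tendsto_iff : ∀ (A : ℕ → Set T), (∀ n, MeasurableSet (A n)) → ∀ w : W, w ≠ 0 →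
      (Tendsto (fun n => Fn ((A n).indicator fun _ => w)) atTop (𝓝 0) ↔
        Tendsto (fun n => μ (A n)) atTop (𝓝 0))
  /-- (f): dominated a.e. convergence implies F-norm convergence. -/
  dominated : ∀ (f : T → W) (fs : ℕ → T → W), f ∈ carrier → (∀ n, fs n ∈ carrier) →
      (∀ᵐ t ∂μ, Tendsto (fun n => fs n t) atTop (𝓝 (f t))) →
      (∀ n t, ‖fs n t‖ ≤ ‖f t‖) →
      Tendsto (fun n => Fn (fs n - f)) atTop (𝓝 0)
  /-- Completeness: `X` is a Fréchet space for the metric induced by the F-norm. -/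
  complete : ∀ fs : ℕ → T → W, (∀ n, fs n ∈ carrier) →
      (∀ ε : ℝ, 0 < ε → ∃ N, ∀ p q, N ≤ p → N ≤ q → Fn (fs p - fs q) < ε) →
      ∃ f ∈ carrier, Tendsto (fun n => Fn (fs n - f)) atTop (𝓝 0)

/-- A set `Z ⊆ X` is compact for the metric induced by the F-norm
(stated sequentially, which is equivalent in metric spaces). -/
def FAdmissibleSpace.IsCompactSet {T : Type*} [MeasurableSpace T] {μ : Measure T}
    {W : Type*} [NormedAddCommGroup W] [NormedSpace ℝ W]
    (X : FAdmissibleSpace μ W) (Z : Set (T → W)) : Prop :=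
  ∀ g : ℕ → T → W, (∀ n, g n ∈ Z) →
    ∃ f ∈ Z, ∃ φ : ℕ → ℕ, StrictMono φ ∧
      Tendsto (fun k => X.Fn (g (φ k) - f)) atTop (𝓝 0)

section Aux

variable {T : Type*} [MeasurableSpace T] {μ : Measure T}
  {W : Type*} [NormedAddCommGroup W] [NormedSpace ℝ W]

namespace FAdmissibleSpace

lemma Fn_zero (X : FAdmissibleSpace μ W) : X.Fn 0 = 0 :=
  (X.Fn_eq_zero 0 X.zero_mem).2 (by rfl)

lemma Fn_ae_zero (X : FAdmissibleSpace μ W) {h : T → W}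
    (hm : AEStronglyMeasurable h μ) (h0 : h =ᵐ[μ] 0) : X.Fn h = 0 := by
  have := X.mono h 0 hm X.zero_mem (by filter_upwards [h0] with t ht; simp [ht])
  have h1 : X.Fn h ≤ 0 := by simpa [X.Fn_zero] using this.2
  exact le_antisymm h1 (X.Fn_nonneg h)

lemma sub_mem (X : FAdmissibleSpace μ W) {f g : T → W}
    (hf : f ∈ X.carrier) (hg : g ∈ X.carrier) : f - g ∈ X.carrier := by
  have := X.add_mem f ((-1 : ℝ) • g) hf (X.smul_mem (-1) g hg)
  simpa [sub_eq_add_neg] using this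

lemma Fn_sub_rev (X : FAdmissibleSpace μ W) (f g : T → W) :
    X.Fn (f - g) = X.Fn (g - f) := by
  rw [← X.Fn_neg (f - g), neg_sub]

/-- Lemma C: uniformly bounded functions that are small off a small set have small F-norm. -/
lemma lemC (X : FAdmissibleSpace μ W) (hTfin : μ Set.univ < ⊤)
    {w₀ : W} (hw₀ : ‖w₀‖ = 1) {ε : ℝ} (hε : 0 < ε) {C : ℝ} (hC : 0 < C) :
    ∃ η > (0:ℝ), ∃ δ > (0:ℝ), ∀ h : T → W, AEStronglyMeasurable h μ →
      (∀ᵐ t ∂μ, ‖h t‖ ≤ C) → ∀ A : Set T, MeasurableSet A → μ A ≤ ENNReal.ofReal δ →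
      (∀ᵐ t ∂μ, t ∉ A → ‖h t‖ ≤ η) → X.Fn h < ε := by
  -- choose η
  have hconst : ∀ c : W, (fun _ : T => c) = Set.indicator Set.univ (fun _ => c) := by
    intro c; simp
  have hmem_const : ∀ c : W, (fun _ : T => c) ∈ X.carrier := by
    intro c
    have := X.simple_mem (SimpleFunc.const T c)
      (lt_of_le_of_lt (measure_mono (Set.subset_univ _)) hTfin)
    exact this
  have hη : ∃ η > (0:ℝ), X.Fn (fun _ : T => η • w₀) < ε / 2 := by
    have htend := X.tendsto_const_indicator (fun n => ((n : ℝ) + 1)⁻¹ • w₀) Set.univ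
      MeasurableSet.univ hTfin ?_
    · have := (htend.eventually (gt_mem_nhds (by positivity : (0:ℝ) < ε / 2))).exists
      obtain ⟨n, hn⟩ := this
      refine ⟨((n : ℝ) + 1)⁻¹, by positivity, ?_⟩
      rw [hconst]
      exact hn
    · simp only [norm_smul, hw₀, mul_one, Real.norm_eq_abs]
      have : Tendsto (fun n : ℕ => ((n : ℝ) + 1)⁻¹) atTop (𝓝 0) := by
        simpa [one_div] using tendsto_one_div_add_atTop_nhds_zero_nat (𝕜 := ℝ)
      exact this.congr (by intro n; rw [abs_of_nonneg (by positivity)])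
  obtain ⟨η, hηpos, hηlt⟩ := hη
  -- choose δ
  have hδ : ∃ δ > (0:ℝ), ∀ A : Set T, MeasurableSet A → μ A ≤ ENNReal.ofReal δ →
      X.Fn (A.indicator (fun _ => C • w₀)) < ε / 2 := by
    by_contra hcon
    push_neg at hcon
    have hall : ∀ n : ℕ, ∃ A : Set T, MeasurableSet A ∧
        μ A ≤ ENNReal.ofReal (((n : ℝ) + 1)⁻¹) ∧
        ε / 2 ≤ X.Fn (A.indicator (fun _ => C • w₀)) := by
      intro n
      obtain ⟨A, hA1, hA2, hA3⟩ := hcon (((n : ℝ) + 1)⁻¹) (by positivity)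
      exact ⟨A, hA1, hA2, hA3⟩
    choose A hAmeas hAle hAfn using hall
    have hμ : Tendsto (fun n => μ (A n)) atTop (𝓝 0) := by
      have h2 : Tendsto (fun n : ℕ => ENNReal.ofReal (((n : ℝ) + 1)⁻¹)) atTop (𝓝 0) := by
        rw [← ENNReal.ofReal_zero]
        exact ENNReal.tendsto_ofReal (by simpa [one_div] using tendsto_one_div_add_atTop_nhds_zero_nat (𝕜 := ℝ))
      exact tendsto_of_tendsto_of_tendsto_of_le_of_le tendsto_const_nhds h2
        (fun n => zero_le) hAle
    have hFn := (X.indicator_tendsto_iff A hAmeas (C • w₀)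
      (by simp [smul_ne_zero_iff, hC.ne', norm_eq_zero, ← norm_pos_iff, hw₀])).2 hμ
    have := (hFn.eventually (gt_mem_nhds (by positivity : (0:ℝ) < ε / 2))).exists
    obtain ⟨n, hn⟩ := this
    exact absurd (hAfn n) (not_le.2 hn)
  obtain ⟨δ, hδpos, hδlt⟩ := hδ
  refine ⟨η, hηpos, δ, hδpos, ?_⟩
  intro h hmeas hbound A hAmeas hAμ hsmall
  classical
  -- dominating simple function
  set g : T → W := fun t => if t ∈ A then C • w₀ else η • w₀ with hg
  have hgsimple : g = ⇑(SimpleFunc.piecewise A hAmeas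
      (SimpleFunc.const T (C • w₀)) (SimpleFunc.const T (η • w₀))) := by
    funext t
    simp [hg, SimpleFunc.coe_piecewise, Set.piecewise]
  have hgmem : g ∈ X.carrier := by
    rw [hgsimple]
    exact X.simple_mem _ (lt_of_le_of_lt (measure_mono (Set.subset_univ _)) hTfin)
  have hsplit : g = A.indicator (fun _ => C • w₀) + Aᶜ.indicator (fun _ => η • w₀) := by
    funext t
    by_cases ht : t ∈ A <;> simp [hg, ht, Set.indicator_of_mem, Set.indicator_of_notMem]
  have hFng : X.Fn g < ε := by
    calc X.Fn g ≤ X.Fn (A.indicator (fun _ => C • w₀)) + X.Fn (Aᶜ.indicator (fun _ => η • w₀)) := by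
          rw [hsplit]; exact X.Fn_add _ _
      _ < ε / 2 + ε / 2 := by
          refine add_lt_add_of_lt_of_le (hδlt A hAmeas hAμ) ?_
          have hmono := X.mono (Aᶜ.indicator (fun _ => η • w₀)) (fun _ => η • w₀)
            (aestronglyMeasurable_const.indicator hAmeas.compl) (hmem_const _) ?_
          · exact hmono.2.trans hηlt.le
          · refine Eventually.of_forall fun t => ?_
            by_cases ht : t ∈ Aᶜ <;>
              simp [Set.indicator_of_mem, Set.indicator_of_notMem, ht, norm_nonneg]
      _ = ε := by ring
  have hdom : ∀ᵐ t ∂μ, ‖h t‖ ≤ ‖g t‖ := by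
    filter_upwards [hbound, hsmall] with t h1 h2
    by_cases ht : t ∈ A
    · simpa [hg, ht, norm_smul, hw₀, abs_of_pos hC] using h1
    · simpa [hg, ht, norm_smul, hw₀, abs_of_pos hηpos] using h2 ht
  exact lt_of_le_of_lt (X.mono h g hmeas hgmem hdom).2 hFng

/-- Lemma D: small F-norm forces small measure of the set where the function is large. -/
lemma lemD (X : FAdmissibleSpace μ W) {w₀ : W} (hw₀ : ‖w₀‖ = 1)
    {η : ℝ} (hη : 0 < η) {δ : ℝ} (hδ : 0 < δ) :
    ∃ ρ > (0:ℝ), ∀ h : T → W, h ∈ X.carrier → ∀ A : Set T, MeasurableSet A →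
      (∀ᵐ t ∂μ, t ∈ A → η ≤ ‖h t‖) → X.Fn h < ρ → μ A < ENNReal.ofReal δ := by
  by_contra hcon
  push_neg at hcon
  have hall : ∀ n : ℕ, ∃ h : T → W, h ∈ X.carrier ∧ ∃ A : Set T, MeasurableSet A ∧
      (∀ᵐ t ∂μ, t ∈ A → η ≤ ‖h t‖) ∧ X.Fn h < ((n : ℝ) + 1)⁻¹ ∧
      ENNReal.ofReal δ ≤ μ A := by
    intro n
    obtain ⟨h, h1, A, h2, h3, h4, h5⟩ := hcon (((n : ℝ) + 1)⁻¹) (by positivity)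
    exact ⟨h, h1, A, h2, h3, h4, h5⟩
  choose h hmem A hAmeas hbig hFn hμ using hall
  have hFnind : ∀ n, X.Fn ((A n).indicator (fun _ => η • w₀)) ≤ X.Fn (h n) := by
    intro n
    refine (X.mono _ _ (aestronglyMeasurable_const.indicator (hAmeas n)) (hmem n) ?_).2
    filter_upwards [hbig n] with t ht
    by_cases h' : t ∈ A n
    · simpa [Set.indicator_of_mem, h', norm_smul, hw₀, abs_of_pos hη] using ht h'
    · simp [Set.indicator_of_notMem, h', norm_nonneg]
  have htend : Tendsto (fun n => X.Fn ((A n).indicator (fun _ => η • w₀))) atTop (𝓝 0) := by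
    refine tendsto_of_tendsto_of_tendsto_of_le_of_le tendsto_const_nhds
      (by simpa [one_div] using tendsto_one_div_add_atTop_nhds_zero_nat (𝕜 := ℝ))
      (fun n => X.Fn_nonneg _) (fun n => ((hFnind n).trans (hFn n).le))
  have hμ0 := (X.indicator_tendsto_iff A hAmeas (η • w₀)
    (by simp [smul_ne_zero_iff, hη.ne', norm_eq_zero, ← norm_pos_iff, hw₀])).1 htend
  have := (hμ0.eventually (gt_mem_nhds (ENNReal.ofReal_pos.2 hδ))).exists
  obtain ⟨n, hn⟩ := this
  exact absurd (hμ n) (not_le.2 hn)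

end FAdmissibleSpace

end Aux

section Pav

variable {T : Type*} [MeasurableSpace T] {μ : Measure T}
  {W : Type*} [NormedAddCommGroup W] [NormedSpace ℝ W] [CompleteSpace W]

/-- The averaging projection associated to a finite partition. -/
noncomputable def pav (μ : Measure T) {k : ℕ} (K : Fin k → Set T) (f : T → W) : T → W :=
  fun t => ∑ i, Set.indicator (K i)
    (fun _ => (μ (K i)).toReal⁻¹ • ∫ s in K i, f s ∂μ) t

variable {k : ℕ} {K : Fin k → Set T}

lemma pav_apply (hdisj : Pairwise (Function.onFun Disjoint K)) (f : T → W)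
    {i : Fin k} {t : T} (ht : t ∈ K i) :
    pav μ K f t = (μ (K i)).toReal⁻¹ • ∫ s in K i, f s ∂μ := by
  rw [pav, Finset.sum_eq_single_of_mem i (Finset.mem_univ i)]
  · rw [Set.indicator_of_mem ht]
  · intro j _ hj
    refine Set.indicator_of_notMem (fun htj => ?_) _
    exact Set.disjoint_left.mp (hdisj hj) htj ht

lemma pav_stronglyMeasurable (hmeas : ∀ i, MeasurableSet (K i)) (f : T → W) :
    StronglyMeasurable (pav μ K f) := by
  apply Finset.stronglyMeasurable_fun_sum
  intro i _
  exact stronglyMeasurable_const.indicator (hmeas i)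

lemma pav_bound (hdisj : Pairwise (Function.onFun Disjoint K))
    (hcover : (⋃ i, K i) = Set.univ) (hpos : ∀ i, 0 < μ (K i)) (hfin : ∀ i, μ (K i) ≠ ⊤)
    {f : T → W} (hsm : AEStronglyMeasurable f μ) {C : ℝ}
    (hbC : ∀ᵐ t ∂μ, ‖f t‖ ≤ C) (t : T) : ‖pav μ K f t‖ ≤ C := by
  have ht : t ∈ ⋃ i, K i := by rw [hcover]; trivial
  obtain ⟨i, hi⟩ := Set.mem_iUnion.1 ht
  rw [pav_apply hdisj f hi]
  have hmi : 0 < (μ (K i)).toReal := ENNReal.toReal_pos (hpos i).ne' (hfin i)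
  have hint : ‖∫ s in K i, f s ∂μ‖ ≤ C * (μ (K i)).toReal :=
    norm_setIntegral_le_of_norm_le_const_ae' (lt_top_iff_ne_top.2 (hfin i))
      (by filter_upwards [hbC] with s hs _ using hs)
  rw [norm_smul, Real.norm_eq_abs, abs_of_nonneg (inv_nonneg.2 hmi.le)]
  calc (μ (K i)).toReal⁻¹ * ‖∫ s in K i, f s ∂μ‖
      ≤ (μ (K i)).toReal⁻¹ * (C * (μ (K i)).toReal) := by
        exact mul_le_mul_of_nonneg_left hint (inv_nonneg.2 hmi.le)
    _ = C := by field_simp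
  
lemma pav_add (f g : T → W) (hf : Integrable f μ) (hg : Integrable g μ) :
    pav μ K (f + g) = pav μ K f + pav μ K g := by
  funext t
  simp only [pav, Pi.add_apply]
  rw [← Finset.sum_add_distrib]
  refine Finset.sum_congr rfl fun i _ => ?_
  have : ∫ s in K i, (f s + g s) ∂μ = (∫ s in K i, f s ∂μ) + ∫ s in K i, g s ∂μ :=
    integral_add hf.integrableOn hg.integrableOn
  rw [this]
  by_cases ht : t ∈ K i
  · simp [Set.indicator_of_mem ht, smul_add]
  · simp [Set.indicator_of_notMem ht]

lemma pav_ae_eq_of_ae_const (hmeas : ∀ i, MeasurableSet (K i))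
    (hdisj : Pairwise (Function.onFun Disjoint K)) (hcover : (⋃ i, K i) = Set.univ)
    (hpos : ∀ i, 0 < μ (K i)) (hfin : ∀ i, μ (K i) ≠ ⊤) {f : T → W}
    (hconst : ∀ i, ∃ c : W, ∀ᵐ t ∂μ, t ∈ K i → f t = c) :
    pav μ K f =ᵐ[μ] f := by
  choose c hc using hconst
  have hint : ∀ i, ∫ s in K i, f s ∂μ = (μ (K i)).toReal • c i := by
    intro i
    rw [setIntegral_congr_ae (hmeas i) (by filter_upwards [hc i] with t ht hti using ht hti)]
    simp [setIntegral_const]; rfl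
  have hall : ∀ᵐ t ∂μ, ∀ i, t ∈ K i → f t = c i := by
    rw [ae_all_iff]; exact hc
  filter_upwards [hall] with t ht
  have htmem : t ∈ ⋃ i, K i := by rw [hcover]; trivial
  obtain ⟨i, hi⟩ := Set.mem_iUnion.1 htmem
  rw [pav_apply hdisj f hi, hint i, smul_smul,
    inv_mul_cancel₀ (ENNReal.toReal_pos (hpos i).ne' (hfin i)).ne', one_smul, ht i hi]

lemma pav_small (hmeas : ∀ i, MeasurableSet (K i))
    (hdisj : Pairwise (Function.onFun Disjoint K)) (hcover : (⋃ i, K i) = Set.univ)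
    (hpos : ∀ i, 0 < μ (K i)) (hfin : ∀ i, μ (K i) ≠ ⊤) (hTfin : μ Set.univ < ⊤)
    {f : T → W} (hsm : AEStronglyMeasurable f μ) {C η : ℝ} (hC : 0 < C) (hη : 0 < η)
    (hbC : ∀ᵐ t ∂μ, ‖f t‖ ≤ C) {A : Set T} (hA : MeasurableSet A)
    (hAb : ∀ᵐ t ∂μ, t ∉ A → ‖f t‖ ≤ η) :
    ∃ B : Set T, MeasurableSet B ∧ (μ B).toReal ≤ (C / η) * (μ A).toReal ∧
      ∀ t, t ∉ B → ‖pav μ K f t‖ ≤ 2 * η := by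
  classical
  haveI : IsFiniteMeasure μ := ⟨hTfin⟩
  set m : Fin k → ℝ := fun i => (μ (K i)).toReal with hm
  set a : Fin k → ℝ := fun i => (μ (K i ∩ A)).toReal with ha
  have hm0 : ∀ i, 0 < m i := fun i => ENNReal.toReal_pos (hpos i).ne' (hfin i)
  have ha0 : ∀ i, 0 ≤ a i := fun i => ENNReal.toReal_nonneg
  set bad : Finset (Fin k) := Finset.univ.filter (fun i => η * m i < C * a i) with hbad
  refine ⟨⋃ i ∈ bad, K i, (bad : Finset (Fin k)).measurableSet_biUnion (fun i _ => hmeas i),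
    ?_, ?_⟩
  · -- measure bound
    have h1 : μ (⋃ i ∈ bad, K i) ≤ ∑ i ∈ bad, μ (K i) := measure_biUnion_finset_le bad K
    have h2 : (μ (⋃ i ∈ bad, K i)).toReal ≤ ∑ i ∈ bad, m i := by
      refine le_trans (ENNReal.toReal_mono ?_ h1) ?_
      · exact (ENNReal.sum_lt_top.2 fun i _ => lt_top_iff_ne_top.2 (hfin i)).ne
      · rw [ENNReal.toReal_sum (fun i _ => hfin i)]
    have h3 : ∑ i ∈ bad, m i ≤ ∑ i ∈ bad, (C / η) * a i := by
      refine Finset.sum_le_sum fun i hi => ?_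
      have := (Finset.mem_filter.1 hi).2
      rw [div_mul_eq_mul_div, le_div_iff₀ hη, mul_comm (m i) η]
      exact this.le
    have h4 : ∑ i ∈ bad, (C / η) * a i ≤ (C / η) * ∑ i : Fin k, a i := by
      rw [← Finset.mul_sum]
      refine mul_le_mul_of_nonneg_left ?_ (div_nonneg hC.le hη.le)
      exact Finset.sum_le_sum_of_subset_of_nonneg (Finset.subset_univ bad)
        (fun i _ _ => ha0 i)
    have h5 : ∑ i : Fin k, a i = (μ A).toReal := by
      have hdisj' : Pairwise (Function.onFun Disjoint (fun i => K i ∩ A)) := by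
        intro i j hij
        exact Disjoint.mono Set.inter_subset_left Set.inter_subset_left (hdisj hij)
      have : μ (⋃ i, K i ∩ A) = ∑' i, μ (K i ∩ A) :=
        measure_iUnion hdisj' (fun i => (hmeas i).inter hA)
      rw [← Set.iUnion_inter, hcover, Set.univ_inter] at this
      rw [ha]
      rw [this, tsum_fintype, ENNReal.toReal_sum (fun i _ => ?_)]
      exact (lt_of_le_of_lt (measure_mono Set.inter_subset_right)
        (lt_of_le_of_lt (measure_mono (Set.subset_univ A)) hTfin)).ne
    calc (μ (⋃ i ∈ bad, K i)).toReal ≤ ∑ i ∈ bad, m i := h2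
      _ ≤ ∑ i ∈ bad, (C / η) * a i := h3
      _ ≤ (C / η) * ∑ i : Fin k, a i := h4
      _ = (C / η) * (μ A).toReal := by rw [h5]
  · -- pointwise bound off B
    intro t htB
    have htmem : t ∈ ⋃ i, K i := by rw [hcover]; trivial
    obtain ⟨i, hi⟩ := Set.mem_iUnion.1 htmem
    have higood : ¬(η * m i < C * a i) := by
      intro hcontra
      exact htB (Set.mem_biUnion (Finset.mem_filter.2 ⟨Finset.mem_univ i, hcontra⟩) hi)
    push_neg at higood
    have hintg : IntegrableOn f (K i) μ :=
      (Integrable.mono' (integrable_const C) hsm hbC).integrableOn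
    have hsplit : (∫ s in K i ∩ A, f s ∂μ) + ∫ s in K i \ A, f s ∂μ = ∫ s in K i, f s ∂μ :=
      integral_inter_add_diff hA hintg
    have hfinKA : μ (K i ∩ A) < ⊤ :=
      lt_of_le_of_lt (measure_mono Set.inter_subset_left) (lt_top_iff_ne_top.2 (hfin i))
    have hfinKD : μ (K i \ A) < ⊤ :=
      lt_of_le_of_lt (measure_mono Set.diff_subset) (lt_top_iff_ne_top.2 (hfin i))
    have hb1 : ‖∫ s in K i ∩ A, f s ∂μ‖ ≤ C * a i :=
      norm_setIntegral_le_of_norm_le_const_ae' hfinKA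
        (by filter_upwards [hbC] with s hs _ using hs)
    have hb2 : ‖∫ s in K i \ A, f s ∂μ‖ ≤ η * (μ (K i \ A)).toReal :=
      norm_setIntegral_le_of_norm_le_const_ae' hfinKD
        (by filter_upwards [hAb] with s hs hmem using hs hmem.2)
    have hmd : (μ (K i \ A)).toReal ≤ m i :=
      ENNReal.toReal_mono (hfin i) (measure_mono Set.diff_subset)
    have htotal : ‖∫ s in K i, f s ∂μ‖ ≤ 2 * η * m i := by
      rw [← hsplit]
      calc ‖(∫ s in K i ∩ A, f s ∂μ) + ∫ s in K i \ A, f s ∂μ‖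
          ≤ ‖∫ s in K i ∩ A, f s ∂μ‖ + ‖∫ s in K i \ A, f s ∂μ‖ := norm_add_le _ _
        _ ≤ C * a i + η * (μ (K i \ A)).toReal := add_le_add hb1 hb2
        _ ≤ η * m i + η * m i := add_le_add higood
            (mul_le_mul_of_nonneg_left hmd hη.le)
        _ = 2 * η * m i := by ring
    rw [pav_apply hdisj f hi, norm_smul, Real.norm_eq_abs,
      abs_of_nonneg (inv_nonneg.2 (hm0 i).le)]
    calc (m i)⁻¹ * ‖∫ s in K i, f s ∂μ‖ ≤ (m i)⁻¹ * (2 * η * m i) :=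
          mul_le_mul_of_nonneg_left htotal (inv_nonneg.2 (hm0 i).le)
      _ = 2 * η := by field_simp [(hm0 i).ne']

end Pav

section Partition

variable {T : Type*} [MeasurableSpace T] {μ : Measure T}
  {W : Type*} [NormedAddCommGroup W] [NormedSpace ℝ W]

/-- From a finite family of simple functions, produce a finite measurable partition of `T`
into sets of positive measure on which every function of the family is a.e. constant. -/
lemma exists_partition_of_simples (hT0 : 0 < μ Set.univ) (m : ℕ) (s : Fin m → SimpleFunc T W) :
    ∃ (k : ℕ) (K : Fin k → Set T), (∀ i, MeasurableSet (K i)) ∧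
      Pairwise (Function.onFun Disjoint K) ∧ (⋃ i, K i) = Set.univ ∧
      (∀ i, 0 < μ (K i)) ∧
      ∀ (j : Fin m) (i : Fin k), ∃ c : W, ∀ᵐ t ∂μ, t ∈ K i → s j t = c := by
  classical
  set S : T → (Fin m → W) := fun t j => s j t with hS
  have hSfin : (Set.range S).Finite := by
    refine Set.Finite.subset (Set.Finite.pi (fun j => (s j).finite_range)) ?_
    rintro _ ⟨t, rfl⟩
    exact fun j _ => Set.mem_range_self t
  have hfib_meas : ∀ v : Fin m → W, MeasurableSet (S ⁻¹' {v}) := by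
    intro v
    have : S ⁻¹' {v} = ⋂ j, s j ⁻¹' {v j} := by
      ext t
      simp [hS, funext_iff]
    rw [this]
    exact MeasurableSet.iInter fun j => (s j).measurableSet_fiber (v j)
  set R : Finset (Fin m → W) := hSfin.toFinset with hR
  set V : Finset (Fin m → W) := R.filter (fun v => 0 < μ (S ⁻¹' {v})) with hV
  have hmemR : ∀ t, S t ∈ R := fun t => hSfin.mem_toFinset.2 (Set.mem_range_self t)
  have hVne : V.Nonempty := by
    by_contra hc
    rw [Finset.not_nonempty_iff_eq_empty] at hc
    have hnull : ∀ v ∈ R, μ (S ⁻¹' {v}) = 0 := by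
      intro v hv
      by_contra h0
      have : v ∈ V := Finset.mem_filter.2 ⟨hv, pos_iff_ne_zero.2 h0⟩
      simp [hc] at this
    have hcov : Set.univ ⊆ ⋃ v ∈ R, S ⁻¹' {v} := by
      intro t _
      exact Set.mem_biUnion (hmemR t) rfl
    have : μ Set.univ = 0 := by
      refine le_antisymm ?_ zero_le
      calc μ Set.univ ≤ μ (⋃ v ∈ R, S ⁻¹' {v}) := measure_mono hcov
        _ ≤ ∑ v ∈ R, μ (S ⁻¹' {v}) := measure_biUnion_finset_le R _
        _ = 0 := Finset.sum_eq_zero hnull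
    exact absurd this hT0.ne'
  set k : ℕ := V.card with hk
  have hkpos : 0 < k := Finset.card_pos.2 hVne
  set e : Fin k → (Fin m → W) := fun i => (V.equivFin.symm i : Fin m → W) with he
  have heV : ∀ i, e i ∈ V := fun i => (V.equivFin.symm i).2
  have heinj : Function.Injective e :=
    Subtype.val_injective.comp V.equivFin.symm.injective
  have hesurj : ∀ v ∈ V, ∃ i, e i = v := by
    intro v hv
    exact ⟨V.equivFin ⟨v, hv⟩, by simp [he]⟩
  set i₀ : Fin k := ⟨0, hkpos⟩ with hi₀
  set N : Set T := Set.univ \ ⋃ i, S ⁻¹' {e i} with hN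
  have hNmeas : MeasurableSet N :=
    MeasurableSet.univ.diff (MeasurableSet.iUnion fun i => hfib_meas (e i))
  have hNnull : μ N = 0 := by
    have hsub : N ⊆ ⋃ v ∈ R.filter (fun v => ¬ 0 < μ (S ⁻¹' {v})), S ⁻¹' {v} := by
      intro t ht
      refine Set.mem_biUnion (Finset.mem_filter.2 ⟨hmemR t, fun hpos => ?_⟩) rfl
      obtain ⟨i, hi⟩ := hesurj (S t) (Finset.mem_filter.2 ⟨hmemR t, hpos⟩)
      exact ht.2 (Set.mem_iUnion.2 ⟨i, by rw [hi]; rfl⟩)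
    refine le_antisymm ?_ zero_le
    calc μ N ≤ μ (⋃ v ∈ R.filter (fun v => ¬ 0 < μ (S ⁻¹' {v})), S ⁻¹' {v}) :=
          measure_mono hsub
      _ ≤ ∑ v ∈ R.filter (fun v => ¬ 0 < μ (S ⁻¹' {v})), μ (S ⁻¹' {v}) :=
          measure_biUnion_finset_le _ _
      _ = 0 := Finset.sum_eq_zero fun v hv => by
          have := (Finset.mem_filter.1 hv).2
          exact not_lt.1 this |>.antisymm zero_le |>.symm ▸ rfl
  set K : Fin k → Set T := fun i => if i = i₀ then S ⁻¹' {e i} ∪ N else S ⁻¹' {e i} with hK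
  have hfib_sub : ∀ i, S ⁻¹' {e i} ⊆ K i := by
    intro i
    by_cases h : i = i₀ <;> simp [hK, h, Set.subset_union_left]
  have hdisjfib : ∀ i i' : Fin k, i ≠ i' → Disjoint (S ⁻¹' {e i}) (S ⁻¹' {e i'}) := by
    intro i i' hii
    rw [Set.disjoint_left]
    rintro t (ht : S t = e i) (ht' : S t = e i')
    exact hii (heinj (ht ▸ ht'))
  have hNdisj : ∀ i : Fin k, Disjoint N (S ⁻¹' {e i}) := by
    intro i
    rw [Set.disjoint_left]
    rintro t ht (ht' : S t = e i)
    exact ht.2 (Set.mem_iUnion.2 ⟨i, ht'⟩)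
  have hKmem : ∀ (i : Fin k) (t : T), t ∈ K i → t ∈ S ⁻¹' {e i} ∨ (i = i₀ ∧ t ∈ N) := by
    intro i t ht
    by_cases h : i = i₀
    · rw [hK] at ht; simp only [h, if_true] at ht
      rcases ht with h' | h'
      · left; rw [h]; exact h'
      · right; exact ⟨h, h'⟩
    · left; rw [hK] at ht; simpa [h] using ht
  refine ⟨k, K, ?_, ?_, ?_, ?_, ?_⟩
  · intro i
    by_cases h : i = i₀ <;> simp only [hK, h, if_true, if_false]
    · exact (hfib_meas _).union hNmeas
    · exact hfib_meas _
  · intro i i' hii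
    rw [Function.onFun, Set.disjoint_left]
    intro t ht ht'
    rcases hKmem i t ht with h1 | h1 <;> rcases hKmem i' t ht' with h2 | h2
    · exact Set.disjoint_left.1 (hdisjfib i i' hii) h1 h2
    · exact Set.disjoint_left.1 (hNdisj i) h2.2 h1
    · exact Set.disjoint_left.1 (hNdisj i') h1.2 h2
    · exact hii (h1.1.trans h2.1.symm)
  · apply Set.eq_univ_of_forall
    intro t
    by_cases ht : t ∈ ⋃ i, S ⁻¹' {e i}
    · obtain ⟨i, hi⟩ := Set.mem_iUnion.1 ht
      exact Set.mem_iUnion.2 ⟨i, hfib_sub i hi⟩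
    · refine Set.mem_iUnion.2 ⟨i₀, ?_⟩
      simp only [hK, if_pos rfl]
      exact Or.inr ⟨trivial, ht⟩
  · intro i
    refine lt_of_lt_of_le ?_ (measure_mono (hfib_sub i))
    exact (Finset.mem_filter.1 (heV i)).2
  · intro j i
    refine ⟨e i j, ?_⟩
    filter_upwards [measure_eq_zero_iff_ae_notMem.1 hNnull] with t htN hti
    rcases hKmem i t hti with hfib | hfib
    · exact congrFun (hfib : S t = e i) j
    · exact absurd hfib.2 htN

end Partition

section TotallyBounded

variable {T : Type*} [MeasurableSpace T] {μ : Measure T}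
  {W : Type*} [NormedAddCommGroup W] [NormedSpace ℝ W]

/-- Sequential compactness implies total boundedness for the F-norm. -/
lemma FAdmissibleSpace.totallyBounded (X : FAdmissibleSpace μ W) {Z : Set (T → W)}
    (hZcomp : X.IsCompactSet Z) {ρ : ℝ} (hρ : 0 < ρ) :
    ∃ (m : ℕ) (g : Fin m → (T → W)), (∀ j, g j ∈ Z) ∧
      ∀ f ∈ Z, ∃ j, X.Fn (f - g j) < ρ := by
  classical
  by_contra hcon
  push_neg at hcon
  have hpick : ∀ l : List {f // f ∈ Z}, ∃ f : {f // f ∈ Z},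
      ∀ x ∈ l, ρ ≤ X.Fn (f.1 - x.1) := by
    intro l
    obtain ⟨f, hfZ, hf⟩ := hcon l.length (fun j => (l.get j).1) (fun j => (l.get j).2)
    refine ⟨⟨f, hfZ⟩, fun x hx => ?_⟩
    obtain ⟨n, rfl⟩ := List.mem_iff_get.1 hx
    exact hf n
  choose pick hpick using hpick
  set aux : ℕ → List {f // f ∈ Z} := fun n => Nat.rec [] (fun _ ih => pick ih :: ih) n with haux
  have haux_succ : ∀ n, aux (n + 1) = pick (aux n) :: aux n := fun n => rfl
  have haux_step : ∀ n, ∀ x ∈ aux n, x ∈ aux (n + 1) := by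
    intro n x hx
    rw [haux_succ]
    exact List.mem_cons_of_mem _ hx
  have haux_mono : ∀ n n', n ≤ n' → ∀ x ∈ aux n, x ∈ aux n' := by
    intro n n' hle
    induction hle with
    | refl => exact fun x hx => hx
    | step _ ih => exact fun x hx => haux_step _ x (ih x hx)
  have hsep : ∀ n n', n < n' → ρ ≤ X.Fn ((pick (aux n')).1 - (pick (aux n)).1) := by
    intro n n' hlt
    refine hpick (aux n') _ ?_
    have : pick (aux n) ∈ aux (n + 1) := (haux_succ n) ▸ List.mem_cons_self
    exact haux_mono (n + 1) n' hlt _ this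
  obtain ⟨f, hfZ, φ, hφ, htend⟩ := hZcomp (fun n => (pick (aux n)).1)
    (fun n => (pick (aux n)).2)
  have htend' : Tendsto (fun kk => X.Fn ((pick (aux (φ (kk + 1)))).1 - f)
      + X.Fn ((pick (aux (φ kk))).1 - f)) atTop (𝓝 0) := by
    have h1 : Tendsto (fun kk => X.Fn ((pick (aux (φ (kk + 1)))).1 - f)) atTop (𝓝 0) :=
      htend.comp (tendsto_add_atTop_nat 1)
    simpa using h1.add htend
  obtain ⟨kk, hkk⟩ := (htend'.eventually (gt_mem_nhds hρ)).exists
  have h1 := hsep (φ kk) (φ (kk + 1)) (hφ (Nat.lt_succ_self kk))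
  have h2 : X.Fn ((pick (aux (φ (kk + 1)))).1 - (pick (aux (φ kk))).1)
      ≤ X.Fn ((pick (aux (φ (kk + 1)))).1 - f) + X.Fn ((pick (aux (φ kk))).1 - f) := by
    have heq : (pick (aux (φ (kk + 1)))).1 - (pick (aux (φ kk))).1
        = ((pick (aux (φ (kk + 1)))).1 - f) + (f - (pick (aux (φ kk))).1) := by abel
    rw [heq]
    refine (X.Fn_add _ _).trans (le_of_eq ?_)
    rw [X.Fn_sub_rev f ((pick (aux (φ kk))).1)]
  linarith

end TotallyBounded

section Approx

variable {T : Type*} [MeasurableSpace T] {μ : Measure T}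
  {W : Type*} [NormedAddCommGroup W] [NormedSpace ℝ W]

/-- Bounded approximation by a simple function, uniformly off a small set (via Egorov). -/
lemma exists_simple_approx (hTfin : μ Set.univ < ⊤) {f : T → W}
    (hf : AEStronglyMeasurable f μ) {M : ℝ} (hM : 0 < M) (hb : ∀ t, ‖f t‖ ≤ M)
    {η δ : ℝ} (hη : 0 < η) (hδ : 0 < δ) :
    ∃ s : SimpleFunc T W, (∀ t, ‖(s : T → W) t‖ ≤ M) ∧ ∃ A : Set T, MeasurableSet A ∧
      μ A ≤ ENNReal.ofReal δ ∧ ∀ᵐ t ∂μ, t ∉ A → ‖(s : T → W) t - f t‖ ≤ η := by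
  haveI : IsFiniteMeasure μ := ⟨hTfin⟩
  set fm := hf.mk f with hfm_def
  have hfm : StronglyMeasurable fm := hf.stronglyMeasurable_mk
  have hae : f =ᵐ[μ] fm := hf.ae_eq_mk
  have hfmb : ∀ᵐ t ∂μ, ‖fm t‖ ≤ M := by
    filter_upwards [hae] with t ht
    rw [← ht]; exact hb t
  have htend := hfm.tendsto_approxBounded_ae (μ := μ) hfmb
  obtain ⟨A, hAmeas, hAμ, hunif⟩ := tendstoUniformlyOn_of_ae_tendsto'
    (f := fun n => ⇑(hfm.approxBounded M n)) (g := fm)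
    (fun n => (hfm.approxBounded M n).stronglyMeasurable) hfm htend hδ
  rw [Metric.tendstoUniformlyOn_iff] at hunif
  obtain ⟨n, hn⟩ := (hunif η hη).exists
  refine ⟨hfm.approxBounded M n, fun t => hfm.norm_approxBounded_le hM.le n t, A, hAmeas, hAμ, ?_⟩
  filter_upwards [hae] with t ht htA
  have := hn t htA
  rw [dist_comm, dist_eq_norm] at this
  rw [ht]
  exact this.le

end Approx

/-- Theorem 3.3 of the paper. For a compact set `Z` of uniformly bounded
functions in an F-admissible F-space over a finite measure space, and any `ε > 0`, there is a
finite measurable partition `K` of `T` such that the averaging projection `P_K` (which sends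
`f` to the simple function whose value on each `K i` is the average of `f` over `K i`)
satisfies `sup_{f ∈ Z} |P_K(f) − f|_F < ε`. -/
theorem exists_partition_averaging_close
    {T : Type*} [MeasurableSpace T] (μ : Measure T) [SigmaFinite μ]
    {W : Type*} [NormedAddCommGroup W] [NormedSpace ℝ W] [CompleteSpace W]
    (X : FAdmissibleSpace μ W) (hT0 : 0 < μ Set.univ) (hTfin : μ Set.univ < ⊤)
    (Z : Set (T → W)) (hZX : Z ⊆ X.carrier) (hZcomp : X.IsCompactSet Z)
    (M : ℝ) (hMpos : 0 < M) (hbound : ∀ f ∈ Z, ∀ t, ‖f t‖ ≤ M) :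
    ∀ ε : ℝ, 0 < ε →
      ∃ (k : ℕ) (K : Fin k → Set T),
        (∀ i, MeasurableSet (K i)) ∧
        Pairwise (Function.onFun Disjoint K) ∧
        (⋃ i, K i) = Set.univ ∧
        (∀ i, 0 < μ (K i)) ∧
        ∀ f ∈ Z,
          X.Fn ((fun t => ∑ i, Set.indicator (K i)
              (fun _ => (μ (K i)).toReal⁻¹ • ∫ s in K i, f s ∂μ) t) - f) < ε := by
  intro ε hε
  rcases subsingleton_or_nontrivial W with hW | hW
  · -- degenerate case: `W` trivial
    refine ⟨1, fun _ => Set.univ, fun _ => MeasurableSet.univ, ?_, ?_, fun _ => hT0, ?_⟩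
    · intro i j hij
      exact absurd (Subsingleton.elim i j) hij
    · exact Set.iUnion_const Set.univ
    · intro f _
      have h0 : (fun t => ∑ i : Fin 1, Set.indicator (Set.univ : Set T)
          (fun _ => (μ (Set.univ : Set T)).toReal⁻¹ • ∫ s in (Set.univ : Set T), f s ∂μ) t) - f
          = 0 := Subsingleton.elim _ _
      rw [h0, X.Fn_zero]
      exact hε
  · -- main case
    obtain ⟨w₁, hw₁⟩ := exists_ne (0 : W)
    have hw₀ : ‖(‖w₁‖⁻¹ • w₁ : W)‖ = 1 := by
      rw [norm_smul, norm_inv, norm_norm, inv_mul_cancel₀ (norm_ne_zero_iff.2 hw₁)]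
    haveI : IsFiniteMeasure μ := ⟨hTfin⟩
    have hM2 : 0 < 2 * M := by linarith
    obtain ⟨η₁, hη₁, δ₁, hδ₁, hC⟩ := X.lemC hTfin hw₀ (show (0:ℝ) < ε / 5 by linarith) hM2
    set η' : ℝ := η₁ / 2 with hη'def
    have hη'pos : 0 < η' := by positivity
    set δA : ℝ := min δ₁ (δ₁ * η' / (2 * M)) with hδAdef
    have hδApos : 0 < δA := lt_min hδ₁ (by positivity)
    obtain ⟨ρ₀, hρ₀, hD⟩ := X.lemD hw₀ hη'pos hδApos
    set ρ : ℝ := min ρ₀ (ε / 5) with hρdef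
    have hρpos : 0 < ρ := lt_min hρ₀ (by linarith)
    obtain ⟨m, g, hgZ, hnet⟩ := X.totallyBounded hZcomp hρpos
    have happrox : ∀ j : Fin m, ∃ sf : SimpleFunc T W, (∀ t, ‖(sf : T → W) t‖ ≤ M) ∧
        ∃ A : Set T, MeasurableSet A ∧ μ A ≤ ENNReal.ofReal δA ∧
          ∀ᵐ t ∂μ, t ∉ A → ‖(sf : T → W) t - g j t‖ ≤ η' := fun j =>
      exists_simple_approx hTfin (X.measurable_mem _ (hZX (hgZ j))) hMpos
        (hbound _ (hgZ j)) hη'pos hδApos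
    choose sj hsjb A hAmeas hAμ hAb using happrox
    obtain ⟨k, K, hKmeas, hKdisj, hKcover, hKpos, hKconst⟩ :=
      exists_partition_of_simples hT0 m sj
    have hKfin : ∀ i, μ (K i) ≠ ⊤ := fun i =>
      (lt_of_le_of_lt (measure_mono (Set.subset_univ _)) hTfin).ne
    refine ⟨k, K, hKmeas, hKdisj, hKcover, hKpos, ?_⟩
    intro f hf
    obtain ⟨j, hj⟩ := hnet f hf
    show X.Fn (pav μ K f - f) < ε
    set gj : T → W := g j with hgjdef
    set sfj : T → W := ⇑(sj j) with hsfjdef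
    have hfX : f ∈ X.carrier := hZX hf
    have hgX : gj ∈ X.carrier := hZX (hgZ j)
    have hfm : AEStronglyMeasurable f μ := X.measurable_mem f hfX
    have hgm : AEStronglyMeasurable gj μ := X.measurable_mem gj hgX
    have hsm : AEStronglyMeasurable sfj μ := (sj j).stronglyMeasurable.aestronglyMeasurable
    have hfb : ∀ t, ‖f t‖ ≤ M := hbound f hf
    have hgb : ∀ t, ‖gj t‖ ≤ M := hbound gj (hgZ j)
    have hsb : ∀ t, ‖sfj t‖ ≤ M := hsjb j
    have hfint : Integrable f μ :=
      Integrable.mono' (integrable_const M) hfm (Eventually.of_forall hfb)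
    have hgint : Integrable gj μ :=
      Integrable.mono' (integrable_const M) hgm (Eventually.of_forall hgb)
    have hsint : Integrable sfj μ :=
      Integrable.mono' (integrable_const M) hsm (Eventually.of_forall hsb)
    -- decomposition
    have hdecomp : pav μ K f
        = pav μ K (f - gj) + (pav μ K (gj - sfj) + pav μ K sfj) := by
      have h1 : (f - gj) + ((gj - sfj) + sfj) = f := by abel
      calc pav μ K f = pav μ K ((f - gj) + ((gj - sfj) + sfj)) := by rw [h1]
        _ = pav μ K (f - gj) + pav μ K ((gj - sfj) + sfj) :=
            pav_add _ _ (hfint.sub hgint) ((hgint.sub hsint).add hsint)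
        _ = pav μ K (f - gj) + (pav μ K (gj - sfj) + pav μ K sfj) := by
            rw [pav_add _ _ (hgint.sub hsint) hsint]
    have hsum : pav μ K f - f = pav μ K (f - gj) + pav μ K (gj - sfj)
        + (pav μ K sfj - sfj) + (sfj - gj) + (gj - f) := by
      rw [hdecomp]; abel
    have hFn_le : X.Fn (pav μ K f - f) ≤ X.Fn (pav μ K (f - gj))
        + X.Fn (pav μ K (gj - sfj)) + X.Fn (pav μ K sfj - sfj)
        + X.Fn (sfj - gj) + X.Fn (gj - f) := by
      rw [hsum]
      refine (X.Fn_add _ _).trans (add_le_add_left ((X.Fn_add _ _).trans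
        (add_le_add_left ((X.Fn_add _ _).trans
          (add_le_add_left (X.Fn_add _ _) _)) _)) _)
    -- term 5
    have t5 : X.Fn (gj - f) < ε / 5 := by
      rw [X.Fn_sub_rev]
      exact hj.trans_le (min_le_right _ _)
    -- term 4
    have hAμ₁ : μ (A j) ≤ ENNReal.ofReal δ₁ :=
      (hAμ j).trans (ENNReal.ofReal_le_ofReal (min_le_left _ _))
    have t4 : X.Fn (sfj - gj) < ε / 5 := by
      refine hC (sfj - gj) (hsm.sub hgm) ?_ (A j) (hAmeas j) hAμ₁ ?_
      · refine Eventually.of_forall fun t => ?_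
        calc ‖(sfj - gj) t‖ ≤ ‖sfj t‖ + ‖gj t‖ := norm_sub_le _ _
          _ ≤ 2 * M := by have := hsb t; have := hgb t; linarith
      · filter_upwards [hAb j] with t ht htA
        have : ‖sfj t - gj t‖ ≤ η' := ht htA
        have hle : η' ≤ η₁ := by rw [hη'def]; linarith
        exact le_trans this hle
    -- term 3
    have hpavs : pav μ K sfj =ᵐ[μ] sfj :=
      pav_ae_eq_of_ae_const hKmeas hKdisj hKcover hKpos hKfin (fun i => hKconst j i)
    have t3 : X.Fn (pav μ K sfj - sfj) = 0 := by
      refine X.Fn_ae_zero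
        (((pav_stronglyMeasurable hKmeas sfj).aestronglyMeasurable).sub hsm) ?_
      filter_upwards [hpavs] with t ht
      simp [Pi.sub_apply, sub_eq_zero.2 ht]
    -- generic facts for terms 1 and 2
    have hBfromA : ∀ h : T → W, AEStronglyMeasurable h μ → (∀ᵐ t ∂μ, ‖h t‖ ≤ 2 * M) →
        ∀ Aset : Set T, MeasurableSet Aset → (μ Aset).toReal ≤ δA →
        (∀ᵐ t ∂μ, t ∉ Aset → ‖h t‖ ≤ η') → X.Fn (pav μ K h) < ε / 5 := by
      intro h hhm hhb Aset hAsm hAst hAsb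
      obtain ⟨B, hBmeas, hBμ, hBsmall⟩ := pav_small hKmeas hKdisj hKcover hKpos hKfin
        hTfin hhm hM2 hη'pos hhb hAsm hAsb
      have hBt : (μ B).toReal ≤ δ₁ := by
        have h1 : (2 * M / η') * (μ Aset).toReal ≤ (2 * M / η') * δA :=
          mul_le_mul_of_nonneg_left hAst (by positivity)
        have h2 : (2 * M / η') * δA ≤ δ₁ := by
          have h3 : δA ≤ δ₁ * η' / (2 * M) := min_le_right _ _
          calc (2 * M / η') * δA ≤ (2 * M / η') * (δ₁ * η' / (2 * M)) :=
                mul_le_mul_of_nonneg_left h3 (by positivity)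
            _ = δ₁ := by field_simp
        linarith [hBμ]
      have hBfin : μ B ≠ ⊤ := (lt_of_le_of_lt (measure_mono (Set.subset_univ _)) hTfin).ne
      have hBle : μ B ≤ ENNReal.ofReal δ₁ := by
        rw [← ENNReal.ofReal_toReal hBfin]
        exact ENNReal.ofReal_le_ofReal hBt
      refine hC (pav μ K h) (pav_stronglyMeasurable hKmeas h).aestronglyMeasurable
        (Eventually.of_forall (pav_bound hKdisj hKcover hKpos hKfin hhm hhb)) B hBmeas hBle ?_
      refine Eventually.of_forall fun t htB => ?_
      have := hBsmall t htB
      calc ‖pav μ K h t‖ ≤ 2 * η' := this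
        _ = η₁ := by rw [hη'def]; ring
    -- term 2
    have t2 : X.Fn (pav μ K (gj - sfj)) < ε / 5 := by
      refine hBfromA (gj - sfj) (hgm.sub hsm) ?_ (A j) (hAmeas j) ?_ ?_
      · refine Eventually.of_forall fun t => ?_
        calc ‖(gj - sfj) t‖ ≤ ‖gj t‖ + ‖sfj t‖ := norm_sub_le _ _
          _ ≤ 2 * M := by have := hsb t; have := hgb t; linarith
      · have := ENNReal.toReal_mono ENNReal.ofReal_ne_top (hAμ j)
        rwa [ENNReal.toReal_ofReal hδApos.le] at this
      · filter_upwards [hAb j] with t ht htA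
        have h1 : ‖sfj t - gj t‖ ≤ η' := ht htA
        calc ‖(gj - sfj) t‖ = ‖sfj t - gj t‖ := by rw [Pi.sub_apply, norm_sub_rev]
          _ ≤ η' := h1
    -- term 1
    have t1 : X.Fn (pav μ K (f - gj)) < ε / 5 := by
      have hm := hfm.sub hgm
      set hmmk : T → W := hm.mk (f - gj) with hmmkdef
      have hmk : StronglyMeasurable hmmk := hm.stronglyMeasurable_mk
      set Aset : Set T := (fun t => ‖hmmk t‖) ⁻¹' Set.Ici η' with hAsetdef
      have hAsetmeas : MeasurableSet Aset := hmk.norm.measurable measurableSet_Ici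
      have hbig : ∀ᵐ t ∂μ, t ∈ Aset → η' ≤ ‖(f - gj) t‖ := by
        filter_upwards [hm.ae_eq_mk] with t ht hti
        rw [ht]
        exact hti
      have hμA : μ Aset < ENNReal.ofReal δA :=
        hD (f - gj) (X.sub_mem hfX hgX) Aset hAsetmeas hbig
          (hj.trans_le (min_le_left _ _))
      refine hBfromA (f - gj) hm ?_ Aset hAsetmeas ?_ ?_
      · refine Eventually.of_forall fun t => ?_
        calc ‖(f - gj) t‖ ≤ ‖f t‖ + ‖gj t‖ := norm_sub_le _ _
          _ ≤ 2 * M := by have := hfb t; have := hgb t; linarith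
      · have := ENNReal.toReal_mono ENNReal.ofReal_ne_top hμA.le
        rwa [ENNReal.toReal_ofReal hδApos.le] at this
      · filter_upwards [hm.ae_eq_mk] with t ht htA
        rw [ht]
        have : ‖hmmk t‖ < η' := not_le.1 htA
        exact this.le
    linarith [hFn_le, t1, t2, t3, t4, t5]
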